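/- Let (X_n) be a Markov chain on ℝ that is almost surely strictly increasing, whose transition kernel admits a density ρ(x,·) bounded by 1/a uniformly in x, for some a > 0. Then for U = (x₀, x₀ + a) and any κ > 0, limsup_{n→∞} (1/n) log P(L_n(U) ≥ κ) = −∞, where L_n = (1/n)Σ_{i=1}^n δ_{X_i}. -/

import Mathlib

open MeasureTheory Filter
open scoped ENNReal ProbabilityTheory

/-- The density of the first `n+1` states of a Markov chain with initial density `g` and
transition density `ρ`: `g(u₀) ∏_{i<n} ρ(uᵢ, u_{i+1})`. -/
noncomputable def pathDensity (g : ℝ → ℝ≥0∞) (ρ : ℝ → ℝ → ℝ≥0∞) (n : ℕ)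
    (u : Fin (n + 1) → ℝ) : ℝ≥0∞ :=
  g (u 0) * ∏ i : Fin n, ρ (u i.castSucc) (u i.succ)

open scoped Classical in
noncomputable def chainInd (i k : ℕ) (u : Fin (i + k + 1) → ℝ) : ℝ≥0∞ :=
  if ∀ j : ℕ, ∀ _hj : j < k, u ⟨i + j, by omega⟩ < u ⟨i + j + 1, by omega⟩ then 1 else 0

noncomputable def wgt (a : ℝ) (m : ℕ) (s t : ℝ) : ℝ≥0∞ :=
  if t < s + a then ENNReal.ofReal ((s + a - t) ^ m / (a ^ m * m.factorial)) else 0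

lemma lintegral_prod_symm_le {α β : Type*} [MeasurableSpace α] [MeasurableSpace β]
    (μ : Measure α) (ν : Measure β) [SFinite μ] [SFinite ν] (f : α × β → ℝ≥0∞) :
    ∫⁻ z, f z ∂(μ.prod ν) ≤ ∫⁻ y, ∫⁻ x, f (x, y) ∂μ ∂ν := by
  obtain ⟨h, hmeas, hle, heq⟩ := exists_measurable_le_lintegral_eq (μ.prod ν) f
  rw [heq, lintegral_prod_symm _ hmeas.aemeasurable]
  exact lintegral_mono fun y => lintegral_mono fun x => hle _

lemma wgt_inner_bound {a : ℝ} (ha : 0 < a) (ρ : ℝ → ℝ → ℝ≥0∞)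
    (hρ : ∀ x y, ρ x y ≤ ENNReal.ofReal (1 / a)) (m : ℕ) (s t : ℝ) :
    ∫⁻ y, ρ t y * ((if t < y then (1 : ℝ≥0∞) else 0) * wgt a m s y) ≤ wgt a (m + 1) s t := by
  set b := s + a with hb
  have hbound : ∀ y, ρ t y * ((if t < y then (1 : ℝ≥0∞) else 0) * wgt a m s y)
      ≤ ENNReal.ofReal (1 / a) *
        (Set.Ioo t b).indicator
          (fun y => ENNReal.ofReal ((b - y) ^ m / (a ^ m * m.factorial))) y := by
    intro y
    by_cases h1 : t < y
    · by_cases h2 : y < b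
      · rw [Set.indicator_of_mem (Set.mem_Ioo.2 ⟨h1, h2⟩)]
        simp only [wgt, if_pos h1, if_pos h2, one_mul, ← hb]
        exact mul_le_mul_left (hρ t y) _
      · simp [wgt, if_neg h2, ← hb]
    · simp [if_neg h1]
  refine (lintegral_mono hbound).trans ?_
  rw [lintegral_const_mul' _ _ ENNReal.ofReal_ne_top,
    lintegral_indicator measurableSet_Ioo _]
  by_cases htb : t < b
  · have hC : (0 : ℝ) < a ^ m * m.factorial := by positivity
    have hint : IntegrableOn (fun y => (b - y) ^ m / (a ^ m * m.factorial)) (Set.Ioo t b) := by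
      exact ((Continuous.integrableOn_Icc (by fun_prop)).mono_set Set.Ioo_subset_Icc_self)
    have hnn : 0 ≤ᵐ[volume.restrict (Set.Ioo t b)]
        fun y => (b - y) ^ m / (a ^ m * m.factorial) := by
      filter_upwards [ae_restrict_mem measurableSet_Ioo] with y hy
      have h0 : (0 : ℝ) ≤ b - y := by linarith [hy.2]
      positivity
    rw [← ofReal_integral_eq_lintegral_ofReal hint hnn]
    have hcalc : (∫ y in Set.Ioo t b, (b - y) ^ m / (a ^ m * m.factorial))
        = (b - t) ^ (m + 1) / (((m : ℝ) + 1) * (a ^ m * m.factorial)) := by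
      rw [integral_div, ← MeasureTheory.integral_Ioc_eq_integral_Ioo,
        ← intervalIntegral.integral_of_le htb.le,
        intervalIntegral.integral_comp_sub_left (fun u => u ^ m) b, sub_self,
        integral_pow]
      rw [zero_pow (by omega), sub_zero, div_div]
    rw [hcalc, wgt, if_pos htb, ← ENNReal.ofReal_mul (by positivity : (0:ℝ) ≤ 1 / a)]
    apply le_of_eq
    congr 1
    rw [Nat.factorial_succ, hb]
    push_cast
    rw [div_mul_eq_mul_div, one_mul, div_div,
      div_eq_div_iff (by positivity) (by positivity)]
    ring
  · rw [Set.Ioo_eq_empty htb, Measure.restrict_empty, lintegral_zero_measure, mul_zero]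
    exact zero_le

lemma wgt_inner_bound' {a : ℝ} (ha : 0 < a) (ρ : ℝ → ℝ → ℝ≥0∞)
    (hρ : ∀ x y, ρ x y ≤ ENNReal.ofReal (1 / a)) (c : ℝ≥0∞) (m : ℕ) (s t : ℝ) :
    ∫⁻ y, c * (ρ t y * ((if t < y then (1 : ℝ≥0∞) else 0) * wgt a m s y))
      ≤ c * wgt a (m + 1) s t := by
  by_cases hc : c = ⊤
  · subst hc
    by_cases htb : t < s + a
    · refine le_top.trans_eq ?_
      have hpos : (0:ℝ) < s + a - t := by linarith
      rw [wgt, if_pos htb, ENNReal.top_mul]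
      exact (ENNReal.ofReal_pos.2 (by positivity)).ne'
    · have h0 : ∀ y, (⊤ : ℝ≥0∞) * (ρ t y * ((if t < y then (1 : ℝ≥0∞) else 0) * wgt a m s y))
          = 0 := by
        intro y
        rcases lt_or_ge t y with h1 | h1
        · have hw : wgt a m s y = 0 := by rw [wgt, if_neg (by linarith)]
          simp [hw]
        · simp [if_neg (not_lt.2 h1)]
      rw [lintegral_congr h0]
      simp
  · rw [lintegral_const_mul' _ _ hc]
    exact mul_le_mul_right (wgt_inner_bound ha ρ hρ m s t) c

lemma pow_sub_le_factorial (M : ℕ) : ∀ k : ℕ, M ≤ k → M ^ (k - M) ≤ k.factorial := by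
  intro k
  induction k with
  | zero => intro h; simp [Nat.le_zero.1 h]
  | succ k ih =>
    intro h
    rcases Nat.lt_or_ge M (k + 1) with h1 | h1
    · have hMk : M ≤ k := by omega
      have h2 : k + 1 - M = (k - M) + 1 := by omega
      rw [h2, pow_succ, Nat.factorial_succ]
      calc M ^ (k - M) * M ≤ k.factorial * (k + 1) := Nat.mul_le_mul (ih hMk) (by omega)
        _ = (k + 1) * k.factorial := Nat.mul_comm _ _
    · have h2 : M = k + 1 := by omega
      rw [h2, Nat.sub_self, pow_zero]
      exact Nat.one_le_iff_ne_zero.2 (Nat.factorial_pos _).ne'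

lemma key_bound (g : ℝ → ℝ≥0∞) (ρ : ℝ → ℝ → ℝ≥0∞) {a : ℝ} (ha : 0 < a)
    (hρ : ∀ x y, ρ x y ≤ ENNReal.ofReal (1 / a))
    (hprob : ∀ N : ℕ, ∫⁻ u : Fin (N + 1) → ℝ, pathDensity g ρ N u = 1)
    (i : ℕ) : ∀ k m : ℕ,
    ∫⁻ u : Fin (i + k + 1) → ℝ,
      pathDensity g ρ (i + k) u *
        (chainInd i k u * wgt a m (u ⟨i, by omega⟩) (u ⟨i + k, by omega⟩))
      ≤ ENNReal.ofReal (1 / (k + m).factorial) := by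
  intro k
  induction k with
  | zero =>
    intro m
    have h1 : ∀ u : Fin (i + 0 + 1) → ℝ, chainInd i 0 u = 1 := by
      intro u; rw [chainInd, if_pos]; intro j hj; omega
    have h2 : ∀ s : ℝ, wgt a m s s = ENNReal.ofReal (1 / m.factorial) := by
      intro s
      rw [wgt, if_pos (by linarith)]
      congr 1
      rw [show s + a - s = a by ring]
      field_simp
    calc ∫⁻ u : Fin (i + 0 + 1) → ℝ,
          pathDensity g ρ (i + 0) u *
            (chainInd i 0 u * wgt a m (u ⟨i, by omega⟩) (u ⟨i + 0, by omega⟩))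
        = ∫⁻ u : Fin (i + 0 + 1) → ℝ,
            pathDensity g ρ (i + 0) u * ENNReal.ofReal (1 / m.factorial) := by
          refine lintegral_congr fun u => ?_
          rw [h1 u, one_mul]
          congr 1
          exact h2 _
      _ = 1 * ENNReal.ofReal (1 / m.factorial) := by
          rw [lintegral_mul_const' _ _ ENNReal.ofReal_ne_top, hprob (i + 0)]
      _ ≤ ENNReal.ofReal (1 / (0 + m).factorial) := by
          rw [one_mul, Nat.zero_add]
  | succ k ih =>
    intro m
    -- snoc computations
    have hsc : ∀ (x : Fin (i + k + 1) → ℝ) (y : ℝ) (p : ℕ) (hp : p < i + k + 1),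
        (Fin.snoc x y : Fin (i + k + 1 + 1) → ℝ) ⟨p, Nat.lt_succ_of_lt hp⟩ = x ⟨p, hp⟩ := by
      intro x y p hp
      have he : (⟨p, Nat.lt_succ_of_lt hp⟩ : Fin (i + k + 1 + 1)) = Fin.castSucc ⟨p, hp⟩ := by
        apply Fin.ext; simp
      rw [he, Fin.snoc_castSucc]
    have hlastgen : ∀ (x : Fin (i + k + 1) → ℝ) (y : ℝ) (p : ℕ) (hp : p < i + k + 1 + 1),
        p = i + k + 1 → (Fin.snoc x y : Fin (i + k + 1 + 1) → ℝ) ⟨p, hp⟩ = y := by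
      intro x y p hp hpe
      have he : (⟨p, hp⟩ : Fin (i + k + 1 + 1)) = Fin.last (i + k + 1) := by
        apply Fin.ext; simp [hpe]
      rw [he, Fin.snoc_last]
    have hpd : ∀ (x : Fin (i + k + 1) → ℝ) (y : ℝ),
        pathDensity g ρ (i + (k + 1)) (Fin.snoc x y)
          = pathDensity g ρ (i + k) x * ρ (x ⟨i + k, by omega⟩) y := by
      intro x y
      show pathDensity g ρ (i + k + 1) (Fin.snoc x y) = _
      have h0 : (Fin.snoc x y : Fin (i + k + 1 + 1) → ℝ) 0 = x 0 := by
        have he : (0 : Fin (i + k + 1 + 1)) = Fin.castSucc (0 : Fin (i + k + 1)) := by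
          apply Fin.ext; simp
        rw [he, Fin.snoc_castSucc]
      have hlast : (Fin.last (i + k) : Fin (i + k + 1)) = ⟨i + k, by omega⟩ := rfl
      simp only [pathDensity, Fin.prod_univ_castSucc, Fin.succ_castSucc, Fin.snoc_castSucc,
        Fin.succ_last, Fin.snoc_last, h0]
      rw [hlast]
      ring
    have hchain : ∀ (x : Fin (i + k + 1) → ℝ) (y : ℝ),
        chainInd i (k + 1) (Fin.snoc x y)
          = chainInd i k x * (if x ⟨i + k, by omega⟩ < y then (1 : ℝ≥0∞) else 0) := by
      intro x y
      rw [chainInd, chainInd]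
      by_cases h2 : ∀ j : ℕ, ∀ _hj : j < k, x ⟨i + j, by omega⟩ < x ⟨i + j + 1, by omega⟩
      · by_cases h3 : x ⟨i + k, by omega⟩ < y
        · rw [if_pos, if_pos h2, if_pos h3, one_mul]
          intro j hj
          rcases Nat.lt_or_ge j k with hjk | hjk
          · rw [hsc x y (i + j) (by omega), hsc x y (i + j + 1) (by omega)]
            exact h2 j hjk
          · have hjk' : j = k := by omega
            subst hjk'
            rw [hsc x y (i + j) (by omega), hlastgen x y (i + j + 1) (by omega) (by omega)]
            exact h3
        · rw [if_neg, if_pos h2, if_neg h3, mul_zero]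
          intro hall
          apply h3
          have h4 := hall k (by omega)
          rwa [hsc x y (i + k) (by omega), hlastgen x y (i + k + 1) (by omega) (by omega)] at h4
      · rw [if_neg, if_neg h2, zero_mul]
        intro hall
        apply h2
        intro j hj
        have h4 := hall j (by omega)
        rwa [hsc x y (i + j) (by omega), hsc x y (i + j + 1) (by omega)] at h4
    have hsplit : ∀ (x : Fin (i + k + 1) → ℝ) (y : ℝ),
        pathDensity g ρ (i + (k + 1)) (Fin.snoc x y) *
          (chainInd i (k + 1) (Fin.snoc x y) *
            wgt a m ((Fin.snoc x y : Fin (i + k + 1 + 1) → ℝ) ⟨i, by omega⟩)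
              ((Fin.snoc x y : Fin (i + k + 1 + 1) → ℝ) ⟨i + (k + 1), by omega⟩))
          = (pathDensity g ρ (i + k) x * chainInd i k x) *
            (ρ (x ⟨i + k, by omega⟩) y *
              ((if x ⟨i + k, by omega⟩ < y then (1 : ℝ≥0∞) else 0) *
                wgt a m (x ⟨i, by omega⟩) y)) := by
      intro x y
      rw [hpd x y, hchain x y, hsc x y i (by omega),
        hlastgen x y (i + (k + 1)) (by omega) (by omega)]
      ring
    -- measure change
    set E := MeasurableEquiv.piFinSuccAbove (fun _ : Fin (i + k + 1 + 1) => ℝ)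
      (Fin.last (i + k + 1)) with hE
    have hMP : MeasurePreserving E.symm
        (volume : Measure (ℝ × (Fin (i + k + 1) → ℝ)))
        (volume : Measure (Fin (i + k + 1 + 1) → ℝ)) :=
      (volume_preserving_piFinSuccAbove (fun _ : Fin (i + k + 1 + 1) => ℝ)
        (Fin.last (i + k + 1))).symm E
    have hsymm : ∀ (y : ℝ) (x : Fin (i + k + 1) → ℝ), E.symm (y, x) = Fin.snoc x y := by
      intro y x
      simp [hE, MeasurableEquiv.piFinSuccAbove_symm_apply, Fin.insertNthEquiv,
        Fin.insertNth_last']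
    calc ∫⁻ u : Fin (i + (k + 1) + 1) → ℝ,
          pathDensity g ρ (i + (k + 1)) u *
            (chainInd i (k + 1) u * wgt a m (u ⟨i, by omega⟩) (u ⟨i + (k + 1), by omega⟩))
        = ∫⁻ z : ℝ × (Fin (i + k + 1) → ℝ),
            pathDensity g ρ (i + (k + 1)) (E.symm z) *
              (chainInd i (k + 1) (E.symm z) *
                wgt a m (E.symm z ⟨i, by omega⟩) (E.symm z ⟨i + (k + 1), by omega⟩)) := by
          rw [← hMP.map_eq]
          exact (lintegral_map_equiv _ E.symm)
      _ ≤ ∫⁻ x : Fin (i + k + 1) → ℝ, ∫⁻ y : ℝ,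
            pathDensity g ρ (i + (k + 1)) (E.symm (y, x)) *
              (chainInd i (k + 1) (E.symm (y, x)) *
                wgt a m (E.symm (y, x) ⟨i, by omega⟩) (E.symm (y, x) ⟨i + (k + 1), by omega⟩)) := by
          rw [Measure.volume_eq_prod]
          exact lintegral_prod_symm_le _ _ _
      _ ≤ ∫⁻ x : Fin (i + k + 1) → ℝ,
            (pathDensity g ρ (i + k) x * chainInd i k x) *
              wgt a (m + 1) (x ⟨i, by omega⟩) (x ⟨i + k, by omega⟩) := by
          refine lintegral_mono fun x => ?_
          have hcong : ∀ y : ℝ,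
              pathDensity g ρ (i + (k + 1)) (E.symm (y, x)) *
                (chainInd i (k + 1) (E.symm (y, x)) *
                  wgt a m (E.symm (y, x) ⟨i, by omega⟩)
                    (E.symm (y, x) ⟨i + (k + 1), by omega⟩))
              = (pathDensity g ρ (i + k) x * chainInd i k x) *
                (ρ (x ⟨i + k, by omega⟩) y *
                  ((if x ⟨i + k, by omega⟩ < y then (1 : ℝ≥0∞) else 0) *
                    wgt a m (x ⟨i, by omega⟩) y)) := by
            intro y
            rw [hsymm y x]
            exact hsplit x y
          rw [lintegral_congr hcong]
          exact wgt_inner_bound' ha ρ hρ _ m _ _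
      _ = ∫⁻ x : Fin (i + k + 1) → ℝ,
            pathDensity g ρ (i + k) x *
              (chainInd i k x * wgt a (m + 1) (x ⟨i, by omega⟩) (x ⟨i + k, by omega⟩)) := by
          exact lintegral_congr fun x => by ring
      _ ≤ ENNReal.ofReal (1 / (k + (m + 1)).factorial) := ih (m + 1)
      _ = ENNReal.ofReal (1 / ((k + 1) + m).factorial) := by
          rw [show k + (m + 1) = (k + 1) + m by omega]

/-- Let `(X_n)` be a Markov chain on `ℝ` that is a.s. strictly
increasing, whose transition kernel has a density `ρ(x, ·)` bounded by `1/a` uniformly in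
`x`, for some `a > 0`. Then for `U = (x₀, x₀ + a)` and any `κ > 0`,
`limsup_n (1/n) log P(L_n(U) ≥ κ) = −∞`, where `L_n` is the empirical measure of the first
`n` states. -/
theorem stmt13 {Ω : Type*} [MeasureSpace Ω] [IsProbabilityMeasure (ℙ : Measure Ω)]
    (X : ℕ → Ω → ℝ) (hXmeas : ∀ n, Measurable (X n))
    (g : ℝ → ℝ≥0∞) (ρ : ℝ → ℝ → ℝ≥0∞)
    (a : ℝ) (ha : 0 < a)
    (hρbdd : ∀ x y, ρ x y ≤ ENNReal.ofReal (1 / a))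
    (hlaw : ∀ n : ℕ, Measure.map (fun ω (i : Fin (n + 1)) => X i ω) ℙ
      = (volume : Measure (Fin (n + 1) → ℝ)).withDensity (pathDensity g ρ n))
    (hmono : ∀ᵐ ω ∂ℙ, StrictMono fun n => X n ω)
    (x₀ κ : ℝ) (hκ : 0 < κ) :
    Filter.limsup
      (fun n : ℕ => (((n : ℝ)⁻¹ : ℝ) : EReal) *
        ENNReal.log (ℙ {ω | κ ≤ (n : ℝ)⁻¹ *
          ((Finset.range n).filter fun i => X i ω ∈ Set.Ioo x₀ (x₀ + a)).card}))
      Filter.atTop = ⊥ := by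
  have hXmeas' : ∀ n : ℕ, Measurable fun ω (i : Fin (n + 1)) => X i ω := fun n =>
    measurable_pi_lambda _ fun i => hXmeas i
  -- total mass of the path density is 1
  have hprob : ∀ N : ℕ, ∫⁻ u : Fin (N + 1) → ℝ, pathDensity g ρ N u = 1 := by
    intro N
    have h1 : (Measure.map (fun ω (i : Fin (N + 1)) => X i ω) ℙ) Set.univ = 1 := by
      rw [Measure.map_apply (hXmeas' N) MeasurableSet.univ]; simp
    rw [hlaw N] at h1
    rwa [withDensity_apply _ MeasurableSet.univ, Measure.restrict_univ] at h1
  -- probability that `k` consecutive steps after `i` stay within distance `a`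
  have hC : ∀ i k : ℕ,
      ℙ {ω | (∀ j : ℕ, ∀ _hj : j < k, X (i + j) ω < X (i + j + 1) ω) ∧
          X (i + k) ω < X i ω + a} ≤ ENNReal.ofReal (1 / k.factorial) := by
    intro i k
    set S : Set (Fin (i + k + 1) → ℝ) :=
      {u | (∀ j : ℕ, ∀ _hj : j < k, u ⟨i + j, by omega⟩ < u ⟨i + j + 1, by omega⟩) ∧
        u ⟨i + k, by omega⟩ < u ⟨i, by omega⟩ + a} with hS
    have hSmeas : MeasurableSet S := by
      rw [hS, Set.setOf_and]
      apply MeasurableSet.inter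
      · rw [Set.setOf_forall]
        refine MeasurableSet.iInter fun j => ?_
        rw [Set.setOf_forall]
        refine MeasurableSet.iInter fun hj => ?_
        exact measurableSet_lt (measurable_pi_apply _) (measurable_pi_apply _)
      · exact measurableSet_lt (measurable_pi_apply _)
          (by fun_prop)
    have hevent : {ω | (∀ j : ℕ, ∀ _hj : j < k, X (i + j) ω < X (i + j + 1) ω) ∧
        X (i + k) ω < X i ω + a} = (fun ω (j : Fin (i + k + 1)) => X j ω) ⁻¹' S := rfl
    rw [hevent, ← Measure.map_apply (hXmeas' (i + k)) hSmeas, hlaw (i + k),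
      withDensity_apply _ hSmeas, ← lintegral_indicator hSmeas]
    refine le_trans (lintegral_mono ?_)
      (by simpa using key_bound g ρ ha hρbdd hprob i k 0)
    intro u
    by_cases hu : u ∈ S
    · rw [Set.indicator_of_mem hu]
      have h1 : chainInd i k u = 1 := if_pos hu.1
      have h2 : wgt a 0 (u ⟨i, by omega⟩) (u ⟨i + k, by omega⟩) = 1 := by
        rw [wgt, if_pos hu.2]
        norm_num
      simp only [h1, h2, one_mul, mul_one, le_refl]
    · rw [Set.indicator_of_notMem hu]
      exact zero_le
  -- union bound
  have hEbound : ∀ n : ℕ, 1 ≤ n →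
      ℙ {ω | κ ≤ (n : ℝ)⁻¹ *
          ((Finset.range n).filter fun i => X i ω ∈ Set.Ioo x₀ (x₀ + a)).card}
        ≤ (n : ℝ≥0∞) * ENNReal.ofReal (1 / (⌈κ * n⌉₊ - 1).factorial) := by
    intro n hn
    set k := ⌈κ * n⌉₊ - 1 with hk
    have hn' : (0 : ℝ) < n := by exact_mod_cast hn
    have hm1 : 1 ≤ ⌈κ * n⌉₊ := Nat.ceil_pos.2 (by positivity)
    set A := {ω : Ω | StrictMono fun n => X n ω} with hA
    have hAc : ℙ Aᶜ = 0 := by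
      have := MeasureTheory.ae_iff.1 hmono
      simpa [hA, Set.compl_setOf] using this
    set C : ℕ → Set Ω := fun i =>
      {ω | (∀ j : ℕ, ∀ _hj : j < k, X (i + j) ω < X (i + j + 1) ω) ∧
        X (i + k) ω < X i ω + a} with hCdef
    have hincl : {ω | κ ≤ (n : ℝ)⁻¹ *
        ((Finset.range n).filter fun i => X i ω ∈ Set.Ioo x₀ (x₀ + a)).card}
        ⊆ (⋃ i ∈ Finset.range n, C i) ∪ Aᶜ := by
      intro ω hω
      by_cases hAω : StrictMono fun n => X n ω
      case neg => exact Or.inr hAω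
      left
      set F := (Finset.range n).filter (fun i => X i ω ∈ Set.Ioo x₀ (x₀ + a)) with hF
      have hω' : κ ≤ (n : ℝ)⁻¹ * F.card := hω
      have hcard : ⌈κ * n⌉₊ ≤ F.card := by
        apply Nat.ceil_le.2
        calc κ * n ≤ ((n : ℝ)⁻¹ * F.card) * n := mul_le_mul_of_nonneg_right hω' hn'.le
          _ = F.card := by field_simp
      have hFne : F.Nonempty := Finset.card_pos.1 (by omega)
      set i₀ := F.min' hFne with hi₀def
      set i₁ := F.max' hFne with hi₁def
      have hi₀F : i₀ ∈ F := F.min'_mem hFne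
      have hi₁F : i₁ ∈ F := F.max'_mem hFne
      have hi₀n : i₀ < n := Finset.mem_range.1 (Finset.mem_filter.1 hi₀F).1
      have hi₀U : X i₀ ω ∈ Set.Ioo x₀ (x₀ + a) := (Finset.mem_filter.1 hi₀F).2
      have hi₁U : X i₁ ω ∈ Set.Ioo x₀ (x₀ + a) := (Finset.mem_filter.1 hi₁F).2
      have hsub : F ⊆ Finset.Icc i₀ i₁ := fun x hx =>
        Finset.mem_Icc.2 ⟨F.min'_le x hx, F.le_max' x hx⟩
      have hcard2 : F.card ≤ i₁ + 1 - i₀ := by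
        have h3 := Finset.card_le_card hsub
        rwa [Nat.card_Icc] at h3
      have hik : i₀ + k ≤ i₁ := by omega
      refine Set.mem_iUnion₂.2 ⟨i₀, Finset.mem_range.2 hi₀n, ?_⟩
      constructor
      · intro j _hj
        exact hAω (by omega : i₀ + j < i₀ + j + 1)
      · have h1 : X (i₀ + k) ω ≤ X i₁ ω := hAω.monotone hik
        have h2 : X i₁ ω < x₀ + a := hi₁U.2
        have h3 : x₀ < X i₀ ω := hi₀U.1
        linarith
    calc ℙ {ω | κ ≤ (n : ℝ)⁻¹ *
          ((Finset.range n).filter fun i => X i ω ∈ Set.Ioo x₀ (x₀ + a)).card}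
        ≤ ℙ ((⋃ i ∈ Finset.range n, C i) ∪ Aᶜ) := measure_mono hincl
      _ ≤ ℙ (⋃ i ∈ Finset.range n, C i) + ℙ Aᶜ := measure_union_le _ _
      _ = ℙ (⋃ i ∈ Finset.range n, C i) := by rw [hAc, add_zero]
      _ ≤ ∑ i ∈ Finset.range n, ℙ (C i) := measure_biUnion_finset_le _ _
      _ ≤ ∑ i ∈ Finset.range n, ENNReal.ofReal (1 / k.factorial) :=
          Finset.sum_le_sum fun i _ => hC i k
      _ = (n : ℝ≥0∞) * ENNReal.ofReal (1 / k.factorial) := by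
          rw [Finset.sum_const, Finset.card_range, nsmul_eq_mul]
  -- conclusion by explicit exponential decay
  apply Filter.Tendsto.limsup_eq
  rw [EReal.tendsto_nhds_bot_iff_real]
  intro R
  set M : ℕ := max 3 ⌈Real.exp ((2 / κ) * (|R| + 2))⌉₊ with hM
  have hM3 : 3 ≤ M := le_max_left _ _
  have hM0 : (0 : ℝ) < M := by exact_mod_cast (by omega : 0 < M)
  have hlogM : (2 / κ) * (|R| + 2) ≤ Real.log M := by
    rw [Real.le_log_iff_exp_le hM0]
    calc Real.exp ((2 / κ) * (|R| + 2)) ≤ (⌈Real.exp ((2 / κ) * (|R| + 2))⌉₊ : ℝ) :=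
          Nat.le_ceil _
      _ ≤ (M : ℝ) := Nat.cast_le.2 (le_max_right _ _)
  have hlogM0 : 0 ≤ Real.log M := le_trans (by positivity) hlogM
  filter_upwards [eventually_ge_atTop (max 2 ⌈2 * ((M : ℝ) + 1) / κ⌉₊)] with n hn
  have hn2 : 2 ≤ n := le_trans (le_max_left _ _) hn
  have hnR : (2 : ℝ) ≤ n := by exact_mod_cast hn2
  have hn0 : (0 : ℝ) < n := by linarith
  have hnc : 2 * ((M : ℝ) + 1) / κ ≤ (n : ℝ) := by
    calc 2 * ((M : ℝ) + 1) / κ ≤ (⌈2 * ((M : ℝ) + 1) / κ⌉₊ : ℝ) := Nat.le_ceil _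
      _ ≤ (n : ℝ) := Nat.cast_le.2 (le_trans (le_max_right _ _) hn)
  have hκn2 : (M : ℝ) + 1 ≤ κ * n / 2 := by
    rw [div_le_iff₀ hκ] at hnc
    linarith
  set m := ⌈κ * (n : ℝ)⌉₊ with hmdef
  have hm : κ * n ≤ (m : ℝ) := Nat.le_ceil _
  have hm1 : 1 ≤ m := Nat.ceil_pos.2 (by positivity)
  set k := m - 1 with hkdef
  have hkR : κ * n - 1 ≤ (k : ℝ) := by
    have h1 : (k : ℝ) = (m : ℝ) - 1 := by
      rw [hkdef, Nat.cast_sub hm1, Nat.cast_one]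
    linarith
  have hMk : M ≤ k := by
    have h1 : (M : ℝ) ≤ (k : ℝ) := by linarith
    exact_mod_cast h1
  have hkM2 : κ * n / 2 ≤ (k : ℝ) - M := by linarith
  have hfact : (M : ℝ) ^ (k - M) ≤ (k.factorial : ℝ) := by
    exact_mod_cast pow_sub_le_factorial M k hMk
  have hcastkM : ((k - M : ℕ) : ℝ) = (k : ℝ) - M := by
    rw [Nat.cast_sub hMk]
  have hfactpos : (0 : ℝ) < k.factorial := by
    exact_mod_cast k.factorial_pos
  have hmain : (n : ℝ) / k.factorial ≤ Real.exp ((R - 1) * n) := by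
    rw [div_le_iff₀ hfactpos]
    have h2 : Real.log n ≤ (R - 1) * n + ((k : ℝ) - M) * Real.log M := by
      have hlogn : Real.log n ≤ n :=
        le_trans (Real.log_le_sub_one_of_pos hn0) (by linarith)
      have h3 : (κ * n / 2) * ((2 / κ) * (|R| + 2)) ≤ ((k : ℝ) - M) * Real.log M :=
        mul_le_mul hkM2 hlogM (by positivity) (by linarith)
      have h4 : (κ * n / 2) * ((2 / κ) * (|R| + 2)) = (|R| + 2) * n := by
        field_simp
      have h5 : -|R| ≤ R := neg_abs_le R
      nlinarith
    calc (n : ℝ) = Real.exp (Real.log n) := (Real.exp_log hn0).symm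
      _ ≤ Real.exp ((R - 1) * n + ((k : ℝ) - M) * Real.log M) := Real.exp_le_exp.2 h2
      _ = Real.exp ((R - 1) * n) * Real.exp (((k : ℝ) - M) * Real.log M) :=
          Real.exp_add _ _
      _ = Real.exp ((R - 1) * n) * (M : ℝ) ^ (k - M) := by
          rw [← hcastkM, ← Real.log_pow, Real.exp_log (by positivity)]
      _ ≤ Real.exp ((R - 1) * n) * k.factorial := by
          exact mul_le_mul_of_nonneg_left hfact (Real.exp_nonneg _)
  have hP : ℙ {ω | κ ≤ (n : ℝ)⁻¹ *
      ((Finset.range n).filter fun i => X i ω ∈ Set.Ioo x₀ (x₀ + a)).card}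
      ≤ ENNReal.ofReal (Real.exp ((R - 1) * n)) := by
    refine le_trans (hEbound n (by omega)) ?_
    rw [show ((n : ℝ≥0∞)) = ENNReal.ofReal (n : ℝ) from (ENNReal.ofReal_natCast n).symm,
      ← ENNReal.ofReal_mul (by positivity)]
    apply ENNReal.ofReal_le_ofReal
    rw [mul_one_div]
    exact hmain
  set P := ℙ {ω | κ ≤ (n : ℝ)⁻¹ *
      ((Finset.range n).filter fun i => X i ω ∈ Set.Ioo x₀ (x₀ + a)).card} with hPdef
  by_cases hz : P = 0
  · rw [hz, ENNReal.log_zero, EReal.coe_mul_bot_of_pos (by positivity : (0 : ℝ) < (n : ℝ)⁻¹)]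
    exact EReal.bot_lt_coe R
  · have hnetop : P ≠ ⊤ := measure_ne_top _ _
    rw [ENNReal.log_pos_real hz hnetop, ← EReal.coe_mul, EReal.coe_lt_coe_iff]
    have htR : P.toReal ≤ Real.exp ((R - 1) * n) :=
      ENNReal.toReal_le_of_le_ofReal (Real.exp_nonneg _) hP
    have htpos : 0 < P.toReal := ENNReal.toReal_pos hz hnetop
    have hlog : Real.log P.toReal ≤ (R - 1) * n := by
      calc Real.log P.toReal ≤ Real.log (Real.exp ((R - 1) * n)) :=
            Real.log_le_log htpos htR
        _ = (R - 1) * n := Real.log_exp _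
    calc (n : ℝ)⁻¹ * Real.log P.toReal ≤ (n : ℝ)⁻¹ * ((R - 1) * n) :=
          mul_le_mul_of_nonneg_left hlog (by positivity)
      _ = R - 1 := by field_simp
      _ < R := by linarith
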